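/- For every integer k ≥ 0 there exists a constant C_k > 0 such that for all ω ∈ (0, 1/8] and all x ∈ ℝ, the k-th derivative of φ_ω satisfies |φ_ω^{(k)}(x)| ≤ C_k ω^{(1+k)/2} e^{−√ω |x|}. -/

import Mathlib

open Real

/-- The solitary-wave profile of the cubic–quintic NLS. -/
noncomputable def phi (ω x : ℝ) : ℝ :=
  Real.sqrt (4 * ω / (1 + Real.sqrt (1 - 16 * ω / 3) * Real.cosh (2 * Real.sqrt ω * x)))

noncomputable def aa (ω : ℝ) : ℝ := Real.sqrt (1 - 16 * ω / 3)
noncomputable def gg (ω x : ℝ) : ℝ := 1 + aa ω * Real.cosh (2 * Real.sqrt ω * x)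
noncomputable def rr (ω x : ℝ) : ℝ :=
  Real.sqrt ω * aa ω * Real.sinh (2 * Real.sqrt ω * x) / gg ω x

variable {ω x : ℝ} {n : WithTop ℕ∞}

lemma ha_nonneg : 0 ≤ aa ω := Real.sqrt_nonneg _
lemma ha_sq (hω : 0 < ω) (h8 : ω ≤ 1/8) : aa ω ^ 2 = 1 - 16 * ω / 3 :=
  Real.sq_sqrt (by nlinarith)
lemma ha_ge (hω : 0 < ω) (h8 : ω ≤ 1/8) : 1 ≤ Real.sqrt 3 * aa ω := by
  have h1 : (1:ℝ)/3 ≤ 1 - 16 * ω / 3 := by nlinarith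
  have := Real.sqrt_le_sqrt h1
  have h3 : Real.sqrt 3 * Real.sqrt (1/3) = 1 := by
    rw [← Real.sqrt_mul (by norm_num)]; norm_num
  calc (1:ℝ) = Real.sqrt 3 * Real.sqrt (1/3) := h3.symm
    _ ≤ Real.sqrt 3 * aa ω := by
        exact mul_le_mul_of_nonneg_left this (Real.sqrt_nonneg 3)

lemma hg_ge_one : 1 ≤ gg ω x := by
  have := Real.one_le_cosh (2 * Real.sqrt ω * x)
  have := ha_nonneg (ω := ω)
  unfold gg
  nlinarith
lemma hg_pos : 0 < gg ω x := lt_of_lt_of_le one_pos hg_ge_one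

lemma cosh_ge (t : ℝ) : Real.exp |t| ≤ 2 * Real.cosh t := by
  rw [Real.cosh_eq]
  rcases abs_cases t with ⟨h, _⟩ | ⟨h, _⟩ <;> rw [h] <;>
    nlinarith [Real.exp_pos t, Real.exp_pos (-t)]

lemma habs (hω : 0 ≤ ω) : |2 * Real.sqrt ω * x| = 2 * Real.sqrt ω * |x| := by
  rw [abs_mul, abs_of_nonneg (by positivity : (0:ℝ) ≤ 2 * Real.sqrt ω)]

lemma hg_lower (hω : 0 < ω) (h8 : ω ≤ 1/8) :
    Real.exp (2 * Real.sqrt ω * |x|) ≤ 4 * gg ω x := by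
  have h1 := cosh_ge (2 * Real.sqrt ω * x)
  rw [habs hω.le] at h1
  have h2 := ha_ge hω h8
  have h3 : Real.sqrt 3 ≤ 2 := by
    rw [show (2:ℝ) = Real.sqrt 4 by
      rw [show (4:ℝ) = 2^2 by norm_num, Real.sqrt_sq (by norm_num)]]
    exact Real.sqrt_le_sqrt (by norm_num)
  have hc := Real.one_le_cosh (2 * Real.sqrt ω * x)
  have hs3 : (0:ℝ) < Real.sqrt 3 := by positivity
  unfold gg
  nlinarith [Real.exp_pos (2 * Real.sqrt ω * |x|), ha_nonneg (ω := ω)]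

lemma sqrt4 : Real.sqrt 4 = 2 := by
  rw [show (4:ℝ) = 2^2 by norm_num, Real.sqrt_sq (by norm_num)]

lemma phi_eq (hω : 0 ≤ ω) : phi ω x = 2 * Real.sqrt ω / Real.sqrt (gg ω x) := by
  unfold phi
  rw [show (1 + Real.sqrt (1 - 16 * ω / 3) * Real.cosh (2 * Real.sqrt ω * x)) = gg ω x from rfl,
    Real.sqrt_div (by positivity), show (4:ℝ) * ω = 4 * ω from rfl,
    Real.sqrt_mul (by norm_num), sqrt4]

lemma phi_sq (hω : 0 ≤ ω) : phi ω x ^ 2 = 4 * ω / gg ω x := by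
  unfold phi
  exact Real.sq_sqrt (div_nonneg (by positivity) (hg_pos (ω := ω) (x := x)).le)

lemma bound_phi (hω : 0 < ω) (h8 : ω ≤ 1/8) :
    |phi ω x| ≤ 4 * Real.sqrt ω * Real.exp (-Real.sqrt ω * |x|) := by
  have hgp : (0:ℝ) < gg ω x := hg_pos
  have h1 : phi ω x ^ 2 ≤ (4 * Real.sqrt ω * Real.exp (-Real.sqrt ω * |x|)) ^ 2 := by
    rw [phi_sq hω.le]
    have hrhs : (4 * Real.sqrt ω * Real.exp (-Real.sqrt ω * |x|)) ^ 2
        = 16 * ω * Real.exp (-(2 * Real.sqrt ω * |x|)) := by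
      rw [mul_pow, mul_pow, Real.sq_sqrt hω.le, ← Real.exp_nat_mul]
      ring_nf
    rw [hrhs]
    rw [div_le_iff₀ hgp]
    have h2 := hg_lower (x := x) hω h8
    have h3 : Real.exp (-(2 * Real.sqrt ω * |x|)) * Real.exp (2 * Real.sqrt ω * |x|) = 1 := by
      rw [← Real.exp_add]; simp
    nlinarith [Real.exp_pos (-(2 * Real.sqrt ω * |x|)), Real.exp_pos (2 * Real.sqrt ω * |x|)]
  rw [← Real.sqrt_sq_eq_abs, ← Real.sqrt_sq
    (show (0:ℝ) ≤ 4 * Real.sqrt ω * Real.exp (-Real.sqrt ω * |x|) by positivity)]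
  exact Real.sqrt_le_sqrt h1

lemma abs_sinh_le_cosh (t : ℝ) : |Real.sinh t| ≤ Real.cosh t := by
  rw [abs_le]
  constructor
  · nlinarith [Real.cosh_add_sinh t, Real.exp_pos t]
  · nlinarith [Real.cosh_sub_sinh t, Real.exp_pos (-t)]

lemma bound_rr (hω : 0 < ω) (h8 : ω ≤ 1/8) : |rr ω x| ≤ Real.sqrt ω := by
  unfold rr
  rw [abs_div, abs_of_pos (hg_pos (ω := ω) (x := x)), abs_mul, abs_mul,
    abs_of_nonneg (Real.sqrt_nonneg ω), abs_of_nonneg (show (0:ℝ) ≤ aa ω from Real.sqrt_nonneg _)]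
  rw [div_le_iff₀ (hg_pos (ω := ω) (x := x))]
  have h1 := abs_sinh_le_cosh (2 * Real.sqrt ω * x)
  have h2 : aa ω * Real.cosh (2 * Real.sqrt ω * x) ≤ gg ω x := by
    unfold gg; nlinarith
  have hs := Real.sqrt_nonneg ω
  have ha : (0:ℝ) ≤ aa ω := Real.sqrt_nonneg _
  have h3 : aa ω * |Real.sinh (2 * Real.sqrt ω * x)| ≤ aa ω * Real.cosh (2 * Real.sqrt ω * x) :=
    mul_le_mul_of_nonneg_left h1 ha
  calc Real.sqrt ω * aa ω * |Real.sinh (2 * Real.sqrt ω * x)|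
      = Real.sqrt ω * (aa ω * |Real.sinh (2 * Real.sqrt ω * x)|) := by ring
    _ ≤ Real.sqrt ω * gg ω x := mul_le_mul_of_nonneg_left (h3.trans h2) hs

lemma phi_eq' (hω : 0 ≤ ω) :
    phi ω = fun x => 2 * Real.sqrt ω / Real.sqrt (gg ω x) := funext fun _ => phi_eq hω

lemma hasDerivAt_gg :
    HasDerivAt (gg ω) (aa ω * (2 * Real.sqrt ω) * Real.sinh (2 * Real.sqrt ω * x)) x := by
  have h1 : HasDerivAt (fun x : ℝ => 2 * Real.sqrt ω * x) (2 * Real.sqrt ω) x := by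
    simpa using (hasDerivAt_id x).const_mul (2 * Real.sqrt ω)
  have h2 := (Real.hasDerivAt_cosh (2 * Real.sqrt ω * x)).comp x h1
  have h3 := h2.const_mul (aa ω)
  have h4 := h3.const_add 1
  exact h4.congr_deriv (by ring)

lemma hgsq_pos : 0 < Real.sqrt (gg ω x) := Real.sqrt_pos.mpr hg_pos

lemma hasDerivAt_phi (hω : 0 < ω) :
    HasDerivAt (phi ω) (-(rr ω x * phi ω x)) x := by
  rw [phi_eq' hω.le]
  have h1 : HasDerivAt (fun x => Real.sqrt (gg ω x))
      (aa ω * (2 * Real.sqrt ω) * Real.sinh (2 * Real.sqrt ω * x) / (2 * Real.sqrt (gg ω x))) x :=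
    (hasDerivAt_gg).sqrt hg_pos.ne'
  have h2 := ((h1.const_mul (2 * Real.sqrt ω)).div (hasDerivAt_const x 1) one_ne_zero)
  -- simpler: use quotient rule directly on const / sqrt g
  have h3 := (hasDerivAt_const x (2 * Real.sqrt ω)).div h1 hgsq_pos.ne'
  refine h3.congr_deriv ?_
  symm
  simp only
  unfold rr
  have hgs := hgsq_pos (ω := ω) (x := x)
  have hg := hg_pos (ω := ω) (x := x)
  set S := Real.sqrt (gg ω x) with hS
  rw [show gg ω x = S ^ 2 from (Real.sq_sqrt hg.le).symm]
  field_simp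
  ring

lemma calc_rr (W A G c s : ℝ) (hG : G ≠ 0) (hA : A * c = G - 1) :
    2 * W ^ 2 - 1 / 2 * (4 * W ^ 2 / G) - 2 * (W * A * s / G * (W * A * s / G)) =
      (W * A * (c * (2 * W)) * G - W * A * s * (A * (2 * W) * s)) / G ^ 2 := by
  field_simp
  linear_combination (-(4 * W ^ 2 * G)) * hA

lemma hasDerivAt_rr (hω : 0 < ω) :
    HasDerivAt (rr ω)
      (2 * ω - (1/2) * (phi ω x * phi ω x) - 2 * (rr ω x * rr ω x)) x := by
  have h1 : HasDerivAt (fun x : ℝ => 2 * Real.sqrt ω * x) (2 * Real.sqrt ω) x := by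
    simpa using (hasDerivAt_id x).const_mul (2 * Real.sqrt ω)
  have h2 := (Real.hasDerivAt_sinh (2 * Real.sqrt ω * x)).comp x h1
  have h3 := h2.const_mul (Real.sqrt ω * aa ω)
  have h4 := h3.div (hasDerivAt_gg (ω := ω) (x := x)) hg_pos.ne'
  refine h4.congr_deriv ?_
  symm
  simp only [Function.comp_def]
  unfold rr
  rw [show phi ω x * phi ω x = 4 * ω / gg ω x by rw [← pow_two (phi ω x)]; exact phi_sq hω.le]
  have hg := hg_pos (ω := ω) (x := x)
  have haa : aa ω * Real.cosh (2 * Real.sqrt ω * x) = gg ω x - 1 := by unfold gg; ring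
  set W := Real.sqrt ω with hW
  set A := aa ω with hA2
  set G := gg ω x with hG2
  rw [show ω = W ^ 2 by rw [hW, Real.sq_sqrt hω.le]]
  exact calc_rr W A G _ _ hg.ne' haa

lemma contDiff_gg : ContDiff ℝ n (gg ω) :=
  contDiff_const.add (contDiff_const.mul (Real.contDiff_cosh.comp (contDiff_const.mul contDiff_id)))

lemma contDiff_sqrt_gg : ContDiff ℝ n (fun x => Real.sqrt (gg ω x)) := by
  rw [contDiff_iff_contDiffAt]
  intro x
  exact (Real.contDiffAt_sqrt (hg_pos (ω := ω) (x := x)).ne').comp x contDiff_gg.contDiffAt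

lemma contDiff_phi (hω : 0 ≤ ω) : ContDiff ℝ n (phi ω) := by
  rw [phi_eq' hω]
  exact contDiff_const.div contDiff_sqrt_gg fun x => (Real.sqrt_pos.mpr hg_pos).ne'

lemma contDiff_rr : ContDiff ℝ n (rr ω) := by
  unfold rr
  exact (contDiff_const.mul (Real.contDiff_sinh.comp (contDiff_const.mul contDiff_id))).div
    contDiff_gg fun x => (hg_pos (ω := ω) (x := x)).ne'

lemma deriv_phi (hω : 0 < ω) : deriv (phi ω) = fun x => -(rr ω x * phi ω x) :=
  funext fun x => (hasDerivAt_phi hω).deriv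

lemma deriv_rr (hω : 0 < ω) :
    deriv (rr ω) = fun x => 2 * ω - (1/2) * (phi ω x * phi ω x) - 2 * (rr ω x * rr ω x) :=
  funext fun x => (hasDerivAt_rr hω).deriv

-- helper iterated deriv lemmas
lemma itd_add {f g : ℝ → ℝ} {k : ℕ} (hf : ContDiff ℝ k f) (hg : ContDiff ℝ k g) (x : ℝ) :
    iteratedDeriv k (fun z => f z + g z) x = iteratedDeriv k f x + iteratedDeriv k g x := by
  simp only [← iteratedDerivWithin_univ]
  exact iteratedDerivWithin_add (Set.mem_univ x) uniqueDiffOn_univ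
    hf.contDiffWithinAt hg.contDiffWithinAt

lemma itd_const_mul {f : ℝ → ℝ} {k : ℕ} (hf : ContDiff ℝ k f) (c x : ℝ) :
    iteratedDeriv k (fun z => c * f z) x = c * iteratedDeriv k f x := by
  simp only [← iteratedDerivWithin_univ]
  exact iteratedDerivWithin_const_mul (Set.mem_univ x) uniqueDiffOn_univ c hf.contDiffWithinAt

lemma itd_const_sub {f : ℝ → ℝ} {k : ℕ} (hk : 0 < k) (c x : ℝ) :
    iteratedDeriv k (fun z => c - f z) x = - iteratedDeriv k f x := by
  simp only [← iteratedDerivWithin_univ]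
  rw [iteratedDerivWithin_const_sub hk c,
    iteratedDerivWithin_fun_neg]

lemma itd_mul_bound {f g : ℝ → ℝ} {k : ℕ} (hf : ContDiff ℝ (⊤ : ℕ∞) f)
    (hg : ContDiff ℝ (⊤ : ℕ∞) g) (x : ℝ) :
    |iteratedDeriv k (fun z => f z * g z) x| ≤ ∑ i ∈ Finset.range (k + 1),
      (k.choose i : ℝ) * |iteratedDeriv i f x| * |iteratedDeriv (k - i) g x| := by
  have h := norm_iteratedFDeriv_mul_le (𝕜 := ℝ) (hf.of_le (WithTop.coe_le_coe.mpr le_top)) (hg.of_le (WithTop.coe_le_coe.mpr le_top)) x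
    (le_refl (k : WithTop ℕ∞))
  simpa only [norm_iteratedFDeriv_eq_norm_iteratedDeriv, Real.norm_eq_abs] using h

lemma expo (hω : 0 < ω) {i k : ℕ} (hik : i ≤ k) :
    ω ^ ((1 + (i:ℝ))/2) * ω ^ ((1 + ((k - i : ℕ):ℝ))/2) = ω ^ ((1 + ((k+1:ℕ):ℝ))/2) := by
  rw [← Real.rpow_add hω]
  congr 1
  rw [Nat.cast_sub hik]
  push_cast
  ring

lemma sqrt_eq_pow (hω : 0 ≤ ω) : ω ^ ((1 + ((0:ℕ):ℝ))/2) = Real.sqrt ω := by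
  rw [Real.sqrt_eq_rpow]
  norm_num

lemma exp_le_one' : Real.exp (-Real.sqrt ω * |x|) ≤ 1 := by
  rw [Real.exp_le_one_iff]
  have : (0:ℝ) ≤ Real.sqrt ω * |x| := by positivity
  linarith

lemma main_bound : ∀ k : ℕ, ∃ C : ℝ, 0 < C ∧ ∀ j ≤ k, ∀ ω ∈ Set.Ioc (0:ℝ) (1/8), ∀ x : ℝ,
    |iteratedDeriv j (phi ω) x| ≤ C * ω ^ ((1 + (j:ℝ))/2) * Real.exp (-Real.sqrt ω * |x|) ∧
    |iteratedDeriv j (rr ω) x| ≤ C * ω ^ ((1 + (j:ℝ))/2) := by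
  intro k
  induction k with
  | zero =>
    refine ⟨4, by norm_num, ?_⟩
    intro j hj ω hω x
    interval_cases j
    rw [iteratedDeriv_zero, iteratedDeriv_zero]
    constructor
    · simp only [Nat.cast_zero]
      rw [show ((1:ℝ) + 0)/2 = 1/2 by norm_num, ← Real.sqrt_eq_rpow]
      exact bound_phi hω.1 hω.2
    · simp only [Nat.cast_zero]
      rw [show ((1:ℝ) + 0)/2 = 1/2 by norm_num, ← Real.sqrt_eq_rpow]
      have := bound_rr (x := x) hω.1 hω.2
      nlinarith [Real.sqrt_nonneg ω]
  | succ k IH =>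
    obtain ⟨C, hC, H⟩ := IH
    refine ⟨C + 12 + 3 * 2^k * C^2, by positivity, ?_⟩
    intro j hj ω hω x
    have hω1 : 0 < ω := hω.1
    have hrpow : (0:ℝ) < ω ^ ((1 + (j:ℝ))/2) := Real.rpow_pos_of_pos hω1 _
    have hexp : (0:ℝ) < Real.exp (-Real.sqrt ω * |x|) := Real.exp_pos _
    rcases Nat.lt_succ_iff_lt_or_eq.mp (Nat.lt_succ_of_le hj) with hjk | rfl
    · -- j ≤ k : monotonicity of constant
      have hjk' : j ≤ k := Nat.lt_succ_iff.mp hjk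
      obtain ⟨h1, h2⟩ := H j hjk' ω hω x
      have hCC : C ≤ C + 12 + 3 * 2^k * C^2 := by
        have : (0:ℝ) ≤ 3 * 2^k * C^2 := by positivity
        linarith
      constructor
      · calc |iteratedDeriv j (phi ω) x| ≤ C * ω ^ ((1 + (j:ℝ))/2) * Real.exp (-Real.sqrt ω * |x|) := h1
          _ ≤ (C + 12 + 3 * 2^k * C^2) * ω ^ ((1 + (j:ℝ))/2) * Real.exp (-Real.sqrt ω * |x|) := by
            gcongr
      · calc |iteratedDeriv j (rr ω) x| ≤ C * ω ^ ((1 + (j:ℝ))/2) := h2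
          _ ≤ (C + 12 + 3 * 2^k * C^2) * ω ^ ((1 + (j:ℝ))/2) := by gcongr
    · -- j = k + 1
      have hD : (0:ℝ) < C + 12 + 3 * 2^k * C^2 := by positivity
      have hsum_choose : (∑ i ∈ Finset.range (k+1), (k.choose i : ℝ)) = 2^k := by
        exact_mod_cast congrArg (Nat.cast : ℕ → ℝ) (Nat.sum_range_choose k)
      have hE : (0:ℝ) < ω ^ ((1 + ((k+1:ℕ):ℝ))/2) := Real.rpow_pos_of_pos hω1 _
      have he1 : Real.exp (-Real.sqrt ω * |x|) ≤ 1 := exp_le_one'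
      -- bounds without exponential factor
      have Hφ : ∀ i ≤ k, |iteratedDeriv i (phi ω) x| ≤ C * ω ^ ((1+(i:ℝ))/2) := by
        intro i hi
        refine ((H i hi ω hω x).1).trans ?_
        have h0 : (0:ℝ) ≤ C * ω ^ ((1+(i:ℝ))/2) := by positivity
        exact mul_le_of_le_one_right h0 he1
      have Hr : ∀ i ≤ k, |iteratedDeriv i (rr ω) x| ≤ C * ω ^ ((1+(i:ℝ))/2) :=
        fun i hi => (H i hi ω hω x).2
      -- generic product bound (no exponential)
      have gen : ∀ f g : ℝ → ℝ, ContDiff ℝ (⊤:ℕ∞) f → ContDiff ℝ (⊤:ℕ∞) g →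
          (∀ i ≤ k, |iteratedDeriv i f x| ≤ C * ω ^ ((1+(i:ℝ))/2)) →
          (∀ i ≤ k, |iteratedDeriv i g x| ≤ C * ω ^ ((1+(i:ℝ))/2)) →
          |iteratedDeriv k (fun z => f z * g z) x| ≤
            2^k * C^2 * ω ^ ((1 + ((k+1:ℕ):ℝ))/2) := by
        intro f g hf hg hbf hbg
        refine (itd_mul_bound hf hg x).trans ?_
        have key : ∀ i ∈ Finset.range (k+1),
            (k.choose i : ℝ) * |iteratedDeriv i f x| * |iteratedDeriv (k-i) g x| ≤
            (k.choose i : ℝ) * (C^2 * ω ^ ((1 + ((k+1:ℕ):ℝ))/2)) := by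
          intro i hi
          have hik : i ≤ k := Nat.lt_succ_iff.mp (Finset.mem_range.mp hi)
          have h1 := hbf i hik
          have h2 := hbg (k-i) (Nat.sub_le k i)
          calc (k.choose i : ℝ) * |iteratedDeriv i f x| * |iteratedDeriv (k-i) g x|
              ≤ (k.choose i : ℝ) * (C * ω ^ ((1 + (i:ℝ))/2)) *
                (C * ω ^ ((1 + ((k-i:ℕ):ℝ))/2)) := by gcongr
            _ = (k.choose i : ℝ) *
                (C^2 * (ω ^ ((1 + (i:ℝ))/2) * ω ^ ((1 + ((k-i:ℕ):ℝ))/2))) := by ring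
            _ = _ := by rw [expo hω1 hik]
        refine (Finset.sum_le_sum key).trans ?_
        rw [← Finset.sum_mul, hsum_choose]
        exact le_of_eq (by ring)
      constructor
      · -- phi part
        rw [iteratedDeriv_succ', deriv_phi hω1]
        rw [show (fun z => -(rr ω z * phi ω z)) = fun z => -((fun z => rr ω z * phi ω z) z)
          from rfl]
        rw [iteratedDeriv_fun_neg, abs_neg]
        -- product bound with exponential kept
        have prod_phi : |iteratedDeriv k (fun z => rr ω z * phi ω z) x| ≤
            2^k * C^2 * ω ^ ((1 + ((k+1:ℕ):ℝ))/2) * Real.exp (-Real.sqrt ω * |x|) := by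
          refine (itd_mul_bound contDiff_rr (contDiff_phi hω1.le) x).trans ?_
          have key : ∀ i ∈ Finset.range (k+1),
              (k.choose i : ℝ) * |iteratedDeriv i (rr ω) x| * |iteratedDeriv (k-i) (phi ω) x| ≤
              (k.choose i : ℝ) *
                (C^2 * ω ^ ((1 + ((k+1:ℕ):ℝ))/2) * Real.exp (-Real.sqrt ω * |x|)) := by
            intro i hi
            have hik : i ≤ k := Nat.lt_succ_iff.mp (Finset.mem_range.mp hi)
            have h1 := Hr i hik
            have h2 := (H (k-i) (Nat.sub_le k i) ω hω x).1
            calc (k.choose i : ℝ) * |iteratedDeriv i (rr ω) x| * |iteratedDeriv (k-i) (phi ω) x|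
                ≤ (k.choose i : ℝ) * (C * ω ^ ((1 + (i:ℝ))/2)) *
                  (C * ω ^ ((1 + ((k-i:ℕ):ℝ))/2) * Real.exp (-Real.sqrt ω * |x|)) := by gcongr
              _ = (k.choose i : ℝ) * (C^2 * (ω ^ ((1 + (i:ℝ))/2) * ω ^ ((1 + ((k-i:ℕ):ℝ))/2)) *
                  Real.exp (-Real.sqrt ω * |x|)) := by ring
              _ = _ := by rw [expo hω1 hik]
          refine (Finset.sum_le_sum key).trans ?_
          rw [← Finset.sum_mul, hsum_choose]
          exact le_of_eq (by ring)
        refine prod_phi.trans ?_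
        have h2k : 2^k * C^2 ≤ C + 12 + 3 * 2^k * C^2 := by
          have h1 : (0:ℝ) ≤ 2^k * C^2 := by positivity
          linarith
        gcongr
      · -- rr part
        rw [iteratedDeriv_succ', deriv_rr hω1]
        have heq : (fun z => 2 * ω - (1/2) * (phi ω z * phi ω z) - 2 * (rr ω z * rr ω z))
            = fun z => 2 * ω - ((1/2) * (phi ω z * phi ω z) + 2 * (rr ω z * rr ω z)) := by
          funext z; ring
        rw [heq]
        rcases Nat.eq_zero_or_pos k with rfl | hk
        · -- k = 0
          rw [iteratedDeriv_zero]
          have hb1 := bound_phi (ω := ω) (x := x) hω1 hω.2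
          have hb2 := bound_rr (ω := ω) (x := x) hω1 hω.2
          have hsq : Real.sqrt ω ^ 2 = ω := Real.sq_sqrt hω1.le
          have hφ2 : phi ω x * phi ω x ≤ 16 * ω := by
            have h4 : |phi ω x| ≤ 4 * Real.sqrt ω := by
              refine hb1.trans ?_
              have h0 : (0:ℝ) ≤ 4 * Real.sqrt ω := by positivity
              exact mul_le_of_le_one_right h0 he1
            have h5 : |phi ω x| * |phi ω x| ≤ (4 * Real.sqrt ω) * (4 * Real.sqrt ω) :=
              mul_le_mul h4 h4 (abs_nonneg _) (by positivity)
            rw [abs_mul_abs_self] at h5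
            nlinarith
          have hr2 : rr ω x * rr ω x ≤ ω := by
            have h5 : |rr ω x| * |rr ω x| ≤ Real.sqrt ω * Real.sqrt ω :=
              mul_le_mul hb2 hb2 (abs_nonneg _) (Real.sqrt_nonneg ω)
            rw [abs_mul_abs_self] at h5
            nlinarith
          have hEone : ω ^ ((1 + ((0+1:ℕ):ℝ))/2) = ω := by
            rw [show ((1:ℝ) + ((0+1:ℕ):ℝ))/2 = 1 by norm_num, Real.rpow_one]
          rw [hEone]
          rw [abs_le]
          have hp0 : (0:ℝ) ≤ phi ω x * phi ω x := mul_self_nonneg _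
          have hr0 : (0:ℝ) ≤ rr ω x * rr ω x := mul_self_nonneg _
          constructor <;> nlinarith [sq_nonneg C, hC]
        · -- k ≥ 1
          rw [itd_const_sub hk, abs_neg]
          have cphi2 : ContDiff ℝ (k:ℕ) fun z => phi ω z * phi ω z :=
            (contDiff_phi hω1.le).mul (contDiff_phi hω1.le)
          have crr2 : ContDiff ℝ (k:ℕ) fun z => rr ω z * rr ω z :=
            contDiff_rr.mul contDiff_rr
          rw [itd_add (contDiff_const.mul cphi2) (contDiff_const.mul crr2) x,
            itd_const_mul cphi2 _ x, itd_const_mul crr2 _ x]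
          have b1 : |iteratedDeriv k (fun z => phi ω z * phi ω z) x| ≤
              2^k * C^2 * ω ^ ((1 + ((k+1:ℕ):ℝ))/2) :=
            gen _ _ (contDiff_phi hω1.le) (contDiff_phi hω1.le) Hφ Hφ
          have b2 : |iteratedDeriv k (fun z => rr ω z * rr ω z) x| ≤
              2^k * C^2 * ω ^ ((1 + ((k+1:ℕ):ℝ))/2) :=
            gen _ _ contDiff_rr contDiff_rr Hr Hr
          have habs : |1/2 * iteratedDeriv k (fun z => phi ω z * phi ω z) x +
              2 * iteratedDeriv k (fun z => rr ω z * rr ω z) x| ≤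
              (1/2) * |iteratedDeriv k (fun z => phi ω z * phi ω z) x| +
              2 * |iteratedDeriv k (fun z => rr ω z * rr ω z) x| := by
            calc _ ≤ |1/2 * iteratedDeriv k (fun z => phi ω z * phi ω z) x| +
                |2 * iteratedDeriv k (fun z => rr ω z * rr ω z) x| := abs_add_le _ _
              _ = _ := by rw [abs_mul, abs_mul]; norm_num
          refine habs.trans ?_
          have hfin : (1/2) * (2^k * C^2 * ω ^ ((1 + ((k+1:ℕ):ℝ))/2)) +
              2 * (2^k * C^2 * ω ^ ((1 + ((k+1:ℕ):ℝ))/2)) ≤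
              (C + 12 + 3 * 2^k * C^2) * ω ^ ((1 + ((k+1:ℕ):ℝ))/2) := by
            have h1 : (0:ℝ) ≤ 2^k * C^2 := by positivity
            nlinarith [hE, hC]
          refine le_trans ?_ hfin
          gcongr

theorem stmt_1 :
    ∀ k : ℕ, ∃ C : ℝ, 0 < C ∧
      ∀ ω ∈ Set.Ioc (0 : ℝ) (1 / 8), ∀ x : ℝ,
        |iteratedDeriv k (phi ω) x| ≤
          C * ω ^ ((1 + (k : ℝ)) / 2) * Real.exp (-Real.sqrt ω * |x|) := by
  intro k
  obtain ⟨C, hC, H⟩ := main_bound k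
  exact ⟨C, hC, fun ω hω x => (H k le_rfl ω hω x).1⟩
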